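/- arXiv:2602.13679 — 2 statements merged into one kernel-verified Lean document; each statement's English description precedes it below -/
import Mathlib

section
/- For all r ≥ 0 and t > 0 and a > 0, with φ₊ = max(φ, 0) for an increasing function φ : (0,∞) → ℝ with increasing inverse φ₊^{-1} on [0,∞): r t − t √(a φ₊^{-1}(t)) ≤ r φ₊(r²/a). -/
open Real

/-- Elementary inequality rt − t√(a·φ₊⁻¹(t)) ≤ r·φ₊(r²/a) used in the proof of
Proposition 3.3(i). -/
theorem young_type_inequality
    (φ φinv : ℝ → ℝ)
    (hφ : StrictMonoOn φ (Set.Ioi 0))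
    (hinv_pos : ∀ t, 0 ≤ t → 0 < φinv t)
    (hinv : ∀ t, 0 ≤ t → φ (φinv t) = t)
    (hinv_mono : ∀ x, 0 < x → ∀ t, 0 ≤ t → φ x ≤ t → x ≤ φinv t)
    (r t a : ℝ) (hr : 0 ≤ r) (ht : 0 < t) (ha : 0 < a) :
    r * t - t * Real.sqrt (a * φinv t) ≤ r * max (φ (r ^ 2 / a)) 0 := by
  rcases eq_or_lt_of_le hr with h0 | hr'
  · have hs : 0 ≤ Real.sqrt (a * φinv t) := Real.sqrt_nonneg _
    rw [← h0]
    nlinarith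
  · by_cases hcase : t ≤ max (φ (r ^ 2 / a)) 0
    · have ht' : t ≤ φ (r ^ 2 / a) :=
        (le_max_iff.mp hcase).resolve_right (by linarith)
      have hmax : φ (r ^ 2 / a) ≤ max (φ (r ^ 2 / a)) 0 := le_max_left _ _
      have hs : 0 ≤ Real.sqrt (a * φinv t) := Real.sqrt_nonneg _
      nlinarith
    · push_neg at hcase
      have hφt : φ (r ^ 2 / a) ≤ t := ((le_max_left _ _).trans_lt hcase).le
      have hx : (0:ℝ) < r ^ 2 / a := by positivity
      have h1 : r ^ 2 / a ≤ φinv t := hinv_mono _ hx t ht.le hφt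
      have h2 : r ^ 2 ≤ a * φinv t := by
        rw [div_le_iff₀ ha] at h1; linarith [h1]
      have h3 : r ≤ Real.sqrt (a * φinv t) := by
        rw [← Real.sqrt_sq hr]; exact Real.sqrt_le_sqrt h2
      have hmax : (0:ℝ) ≤ max (φ (r ^ 2 / a)) 0 := le_max_right _ _
      nlinarith
end

section
/- Let μ be a probability measure and f measurable with ∫ f² dμ = 1 and ∫ f dμ ≥ 0. Then ∫ (|f| − 1)² dμ ≤ 2 Var_μ(f). -/
open Real MeasureTheory

/-- If ∫ f² dμ = 1 and ∫ f dμ ≥ 0 then ∫ (|f|−1)² dμ ≤ 2 Var_μ(f). -/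
theorem abs_minus_one_sq_le_two_var
    {Ω : Type*} [MeasurableSpace Ω] (μ : Measure Ω) [IsProbabilityMeasure μ]
    (f : Ω → ℝ) (hf : Measurable f)
    (hint1 : Integrable f μ)
    (hint2 : Integrable (fun ω => f ω ^ 2) μ)
    (hnorm : ∫ ω, f ω ^ 2 ∂μ = 1)
    (hmean : 0 ≤ ∫ ω, f ω ∂μ) :
    ∫ ω, (|f ω| - 1) ^ 2 ∂μ ≤ 2 * ((∫ ω, f ω ^ 2 ∂μ) - (∫ ω, f ω ∂μ) ^ 2) := by
  have habs : Integrable (fun ω => |f ω|) μ := hint1.abs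
  have hf2 : MemLp f 2 μ := (memLp_two_iff_integrable_sq hf.aestronglyMeasurable).2 hint2
  have hfa2 : MemLp (fun ω => |f ω|) 2 μ := hf2.abs
  -- ∫ (|f|-1)^2 = ∫ f^2 - 2 ∫|f| + 1
  have hexp : ∫ ω, (|f ω| - 1) ^ 2 ∂μ
      = (∫ ω, f ω ^ 2 ∂μ) - 2 * (∫ ω, |f ω| ∂μ) + 1 := by
    have : ∀ ω, (|f ω| - 1) ^ 2 = f ω ^ 2 - 2 * |f ω| + 1 := by
      intro ω; rw [sub_sq]; rw [sq_abs]; ring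
    rw [integral_congr_ae (Filter.Eventually.of_forall this)]
    have i1 : Integrable (fun ω => f ω ^ 2 - 2 * |f ω|) μ := hint2.sub (habs.const_mul 2)
    rw [integral_add i1 (integrable_const 1),
      integral_sub hint2 (habs.const_mul 2), MeasureTheory.integral_const_mul, integral_const]
    simp
  -- (∫|f|)^2 ≤ ∫ f^2 = 1
  have hvar : (∫ ω, |f ω| ∂μ) ^ 2 ≤ ∫ ω, f ω ^ 2 ∂μ := by
    have h := ProbabilityTheory.variance_nonneg (fun ω => |f ω|) μ
    rw [ProbabilityTheory.variance_eq_sub hfa2] at h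
    have heq : (∫ ω, |f ω| ^ 2 ∂μ) = ∫ ω, f ω ^ 2 ∂μ := by
      congr 1; funext ω; exact sq_abs _
    simp only [Pi.pow_apply] at h
    linarith
  have ha1 : ∫ ω, |f ω| ∂μ ≤ 1 := by
    nlinarith [integral_nonneg (f := fun ω => |f ω|) (fun ω => abs_nonneg (f ω)) (μ := μ)]
  have hm : (∫ ω, f ω ∂μ) ≤ ∫ ω, |f ω| ∂μ := by
    calc (∫ ω, f ω ∂μ) ≤ |∫ ω, f ω ∂μ| := le_abs_self _
    _ ≤ ∫ ω, |f ω| ∂μ := by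
        simpa using norm_integral_le_integral_norm (μ := μ) f
  nlinarith [integral_nonneg (f := fun ω => |f ω|) (fun ω => abs_nonneg (f ω)) (μ := μ)]
end
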